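/- Let a > 0, b > 0 and λ > 0 be real numbers, and let z be a complex number with Re(z) ≥ λ. Then |sinh((b − a)z)/(sinh(bz)·cosh(az))| ≤ cosh((b − a)λ)/(sinh(aλ)·sinh(bλ)). -/

import Mathlib

open Real

lemma abs_sinh_le (w : ℂ) : ‖Complex.sinh w‖ ≤ Real.cosh w.re := by
  rw [Complex.sinh, Real.cosh_eq]
  rw [norm_div, Complex.norm_two]
  apply div_le_div_of_nonneg_right ?_ two_pos.le |>.trans_eq rfl
  calc ‖Complex.exp w - Complex.exp (-w)‖
      ≤ ‖Complex.exp w‖ + ‖Complex.exp (-w)‖ :=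
        (norm_sub_le _ _)
    _ = Real.exp w.re + Real.exp (-w.re) := by
        rw [Complex.norm_exp, Complex.norm_exp, Complex.neg_re]

lemma sinh_le_abs_sinh (w : ℂ) : Real.sinh w.re ≤ ‖Complex.sinh w‖ := by
  rw [Complex.sinh, Real.sinh_eq]
  rw [norm_div, Complex.norm_two]
  apply div_le_div_of_nonneg_right ?_ two_pos.le
  calc Real.exp w.re - Real.exp (-w.re)
      = ‖Complex.exp w‖ - ‖Complex.exp (-w)‖ := by
        rw [Complex.norm_exp, Complex.norm_exp, Complex.neg_re]
    _ ≤ ‖Complex.exp w - Complex.exp (-w)‖ := by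
        have h := norm_add_le (Complex.exp w - Complex.exp (-w)) (Complex.exp (-w))
        simp only [sub_add_cancel] at h
        linarith

lemma sinh_le_abs_cosh (w : ℂ) : Real.sinh w.re ≤ ‖Complex.cosh w‖ := by
  rw [Complex.cosh, Real.sinh_eq]
  rw [norm_div, Complex.norm_two]
  apply div_le_div_of_nonneg_right ?_ two_pos.le
  calc Real.exp w.re - Real.exp (-w.re)
      = ‖Complex.exp w‖ - ‖Complex.exp (-w)‖ := by
        rw [Complex.norm_exp, Complex.norm_exp, Complex.neg_re]
    _ ≤ ‖Complex.exp w + Complex.exp (-w)‖ := by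
        have h := norm_add_le (Complex.exp w + Complex.exp (-w)) (-Complex.exp (-w))
        simp only [add_neg_cancel_right, norm_neg] at h
        linarith

-- key real inequality: for 0 ≤ c ≤ d, 0 < l ≤ x:
lemma key_cosh (c d l x : ℝ) (hc : 0 ≤ c) (hcd : c ≤ d) (hl : 0 < l) (hlx : l ≤ x) :
    Real.cosh (c * x) * Real.cosh (d * l) ≤ Real.cosh (c * l) * Real.cosh (d * x) := by
  have e1 : 2 * (Real.cosh (c * x) * Real.cosh (d * l)) =
      Real.cosh (c * x + d * l) + Real.cosh (c * x - d * l) := by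
    rw [Real.cosh_add, Real.cosh_sub]; ring
  have e2 : 2 * (Real.cosh (c * l) * Real.cosh (d * x)) =
      Real.cosh (d * x + c * l) + Real.cosh (d * x - c * l) := by
    rw [Real.cosh_add, Real.cosh_sub]; ring
  have h1 : Real.cosh (c * x + d * l) ≤ Real.cosh (d * x + c * l) := by
    rw [Real.cosh_le_cosh]
    rw [abs_of_nonneg (by nlinarith), abs_of_nonneg (by nlinarith)]
    nlinarith
  have h2 : Real.cosh (c * x - d * l) ≤ Real.cosh (d * x - c * l) := by
    rw [Real.cosh_le_cosh]
    exact abs_le_abs (by nlinarith) (by nlinarith)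
  linarith

/-- For `a, b, λ > 0` and `Re(z) ≥ λ`,
`|sinh((b−a)z)/(sinh(bz)cosh(az))| ≤ cosh((b−a)λ)/(sinh(aλ)sinh(bλ))`. -/
theorem stmt12 (a b lam : ℝ) (ha : 0 < a) (hb : 0 < b) (hlam : 0 < lam)
    (z : ℂ) (hz : lam ≤ z.re) :
    ‖Complex.sinh (((b : ℂ) - (a : ℂ)) * z) /
        (Complex.sinh ((b : ℂ) * z) * Complex.cosh ((a : ℂ) * z))‖ ≤
      Real.cosh ((b - a) * lam) / (Real.sinh (a * lam) * Real.sinh (b * lam)) := by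
  set x := z.re with hx
  have hxpos : 0 < x := lt_of_lt_of_le hlam hz
  -- bounds on the three complex factors
  have hnum : ‖Complex.sinh (((b : ℂ) - (a : ℂ)) * z)‖ ≤ Real.cosh ((b - a) * x) := by
    have := abs_sinh_le (((b : ℂ) - (a : ℂ)) * z)
    simpa [Complex.mul_re, Complex.sub_re, Complex.ofReal_re, Complex.ofReal_im] using this
  have hS : Real.sinh (b * x) ≤ ‖Complex.sinh ((b : ℂ) * z)‖ := by
    have := sinh_le_abs_sinh ((b : ℂ) * z)
    simpa [Complex.mul_re, Complex.ofReal_re, Complex.ofReal_im] using this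
  have hC : Real.sinh (a * x) ≤ ‖Complex.cosh ((a : ℂ) * z)‖ := by
    have := sinh_le_abs_cosh ((a : ℂ) * z)
    simpa [Complex.mul_re, Complex.ofReal_re, Complex.ofReal_im] using this
  have hSa : 0 < Real.sinh (a * x) := Real.sinh_pos_iff.mpr (by positivity)
  have hSb : 0 < Real.sinh (b * x) := Real.sinh_pos_iff.mpr (by positivity)
  have hSal : 0 < Real.sinh (a * lam) := Real.sinh_pos_iff.mpr (by positivity)
  have hSbl : 0 < Real.sinh (b * lam) := Real.sinh_pos_iff.mpr (by positivity)
  -- Step 1: bound by real expression at x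
  have step1 : ‖Complex.sinh (((b : ℂ) - (a : ℂ)) * z) /
        (Complex.sinh ((b : ℂ) * z) * Complex.cosh ((a : ℂ) * z))‖ ≤
      Real.cosh ((b - a) * x) / (Real.sinh (a * x) * Real.sinh (b * x)) := by
    rw [norm_div, norm_mul]
    apply div_le_div₀ (Real.cosh_pos _).le hnum (by positivity)
    calc Real.sinh (a * x) * Real.sinh (b * x)
        ≤ ‖Complex.cosh ((a : ℂ) * z)‖ * ‖Complex.sinh ((b : ℂ) * z)‖ :=
          mul_le_mul hC hS hSb.le (norm_nonneg _)
      _ = ‖Complex.sinh ((b : ℂ) * z)‖ * ‖Complex.cosh ((a : ℂ) * z)‖ :=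
          mul_comm _ _
  refine step1.trans ?_
  -- Step 2: monotonicity in x
  rw [div_le_div_iff₀ (by positivity) (by positivity)]
  -- sinh(al)sinh(bl) = (cosh((a+b)l) - cosh((b-a)l))/2
  have prod_eq : ∀ t : ℝ, Real.sinh (a * t) * Real.sinh (b * t) =
      (Real.cosh ((a + b) * t) - Real.cosh ((b - a) * t)) / 2 := by
    intro t
    have h1 : (a + b) * t = a * t + b * t := by ring
    have h2 : (b - a) * t = b * t - a * t := by ring
    rw [h1, h2, Real.cosh_add, Real.cosh_sub]
    ring
  rw [prod_eq, prod_eq]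
  have hcx : Real.cosh ((b - a) * x) = Real.cosh (|b - a| * x) := by
    rcases abs_cases (b - a) with ⟨h, _⟩ | ⟨h, _⟩
    · rw [h]
    · rw [h]; rw [show -(b - a) * x = -((b - a) * x) by ring, Real.cosh_neg]
  have hcl : Real.cosh ((b - a) * lam) = Real.cosh (|b - a| * lam) := by
    rcases abs_cases (b - a) with ⟨h, _⟩ | ⟨h, _⟩
    · rw [h]
    · rw [h]; rw [show -(b - a) * lam = -((b - a) * lam) by ring, Real.cosh_neg]
  rw [hcx, hcl]
  have key := key_cosh (|b - a|) (a + b) lam x (abs_nonneg _)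
    (by rcases abs_cases (b - a) with ⟨h, _⟩ | ⟨h, _⟩ <;> rw [h] <;> linarith) hlam hz
  have hble : Real.cosh (|b - a| * lam) ≤ Real.cosh ((a + b) * lam) := by
    rw [Real.cosh_le_cosh]
    rw [abs_of_nonneg (mul_nonneg (abs_nonneg _) hlam.le),
      abs_of_nonneg (mul_nonneg (by linarith) hlam.le)]
    have : |b - a| ≤ a + b := by
      rcases abs_cases (b - a) with ⟨h, _⟩ | ⟨h, _⟩ <;> rw [h] <;> linarith
    nlinarith
  have hcoshpos : 0 < Real.cosh (|b - a| * x) := Real.cosh_pos _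
  nlinarith [Real.cosh_pos (x := |b - a| * lam), Real.cosh_pos (x := (a + b) * x),
    Real.cosh_pos (x := (a + b) * lam)]
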